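/- Let x ∈ ℝ^n with ‖x‖₀ = k ≥ 1, i.e., x has exactly k nonzero components. Then the Euclidean distance from x to the set Q_{k−1} = {y ∈ ℝ^n : ‖y‖₀ ≤ k − 1} equals the smallest absolute value of a nonzero component of x: dist(x, Q_{k−1}) = min{|x_j| : x_j ≠ 0}. -/

import Mathlib

open scoped BigOperators

/-- Number of nonzero components of `x`. -/
noncomputable def nnz {n : ℕ} (x : EuclideanSpace ℝ (Fin n)) : ℕ :=
  Set.ncard {i | x i ≠ 0}

lemma coord_le_dist {n : ℕ} (a b : EuclideanSpace ℝ (Fin n)) (i : Fin n) :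
    |a i - b i| ≤ dist a b := by
  rw [EuclideanSpace.dist_eq]
  have h1 : |a i - b i| = Real.sqrt ((a i - b i) ^ 2) := (Real.sqrt_sq_eq_abs _).symm
  rw [h1]
  apply Real.sqrt_le_sqrt
  have := Finset.single_le_sum (f := fun j => (a j - b j) ^ 2)
    (fun j _ => sq_nonneg _) (Finset.mem_univ i)
  simpa [Real.dist_eq, sq_abs] using this

theorem stmt_13 {n : ℕ} (x : EuclideanSpace ℝ (Fin n)) (k : ℕ)
    (hk : nnz x = k) (hk1 : 1 ≤ k) :
    Metric.infDist x {y : EuclideanSpace ℝ (Fin n) | nnz y ≤ k - 1}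
      = sInf ((fun j => |x j|) '' {j | x j ≠ 0}) := by
  set S : Set (Fin n) := {j | x j ≠ 0} with hSdef
  have hSfin : S.Finite := Set.toFinite _
  have hScard : S.ncard = k := hk
  have hSne : S.Nonempty := by
    rw [← Set.ncard_pos hSfin, hScard]; omega
  set T : Set ℝ := (fun j => |x j|) '' S with hTdef
  have hTfin : T.Finite := hSfin.image _
  have hTne : T.Nonempty := hSne.image _
  have hTbdd : BddBelow T := hTfin.bddBelow
  obtain ⟨j₀, hj₀S, hj₀⟩ := hTne.csInf_mem hTfin
  apply le_antisymm
  · -- upper bound: use y = x with coordinate j₀ zeroed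
    set y : EuclideanSpace ℝ (Fin n) := WithLp.toLp 2 (fun i => if i = j₀ then 0 else x i) with hy
    have hyS : {i | y i ≠ 0} = S \ {j₀} := by
      ext i
      by_cases h : i = j₀ <;> simp [hy, h, hSdef]
    have hmem : y ∈ {y : EuclideanSpace ℝ (Fin n) | nnz y ≤ k - 1} := by
      simp only [Set.mem_setOf_eq, nnz, hyS]
      rw [Set.ncard_diff_singleton_of_mem hj₀S, hScard]
    have hdist : dist x y = |x j₀| := by
      rw [EuclideanSpace.dist_eq]
      have hsum : ∑ i, dist (x i) (y i) ^ 2 = (x j₀) ^ 2 := by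
        rw [Finset.sum_eq_single j₀]
        · simp [hy, Real.dist_eq]
        · intro i _ hi
          simp [hy, hi, Real.dist_eq]
        · simp
      rw [hsum, Real.sqrt_sq_eq_abs]
    calc Metric.infDist x {y : EuclideanSpace ℝ (Fin n) | nnz y ≤ k - 1}
        ≤ dist x y := Metric.infDist_le_dist_of_mem hmem
      _ = |x j₀| := hdist
      _ = sInf T := hj₀
  · -- lower bound
    refine le_of_not_gt fun hlt => ?_
    obtain ⟨y, hy, hdy⟩ := (Metric.infDist_lt_iff ⟨0, by simp [nnz]⟩).1 hlt
    have hle : sInf T ≤ dist x y := by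
      have hycard : Set.ncard {i | y i ≠ 0} ≤ k - 1 := hy
      have hnot : ¬ S ⊆ {i | y i ≠ 0} := by
        intro hsub
        have := Set.ncard_le_ncard hsub (Set.toFinite _)
        omega
      obtain ⟨i, hiS, hiy⟩ := Set.not_subset.1 hnot
      have hiy0 : y i = 0 := by simpa using hiy
      have h1 : sInf T ≤ |x i| := csInf_le hTbdd ⟨i, hiS, rfl⟩
      have h2 : |x i| ≤ dist x y := by
        have := coord_le_dist x y i
        rwa [hiy0, sub_zero] at this
      linarith
    linarith
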